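/- arXiv:math/0507056 — 5 statements merged into one kernel-verified Lean document; each statement's English description precedes it below -/
import Mathlib

section
/- For type B_n, the set of linear forms Ξ_ι = { φ_{j;k}(x_{j;1}) : j ≥ 1, 0 ≤ k ≤ 2n−1 } is closed under the action of all operators S_{m;l}: applying any S_{m;l} to φ_{j;k}(x_{j;1}) yields either φ_{j;k−1}(x_{j;1}), φ_{j;k+1}(x_{j;1}), or φ_{j;k}(x_{j;1}) itself. -/
open scoped Classical

noncomputable section

/-- position (j;i) ↦ (j-1)*n + i in the singly-indexed lattice. -/
def pos (n j i : ℕ) : ℕ := (j - 1) * n + i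

/-- the cyclic sequence ι = (…, n, …, 2, 1, n, …, 2, 1): position k ≥ 1 carries index ((k-1) % n)+1. -/
def iotaSeq (n k : ℕ) : ℕ := (k - 1) % n + 1

variable {I : Type*}

/-- σ_k(x) = x_k + Σ_{j>k} ⟨h_{i_k}, α_{i_j}⟩ x_j. -/
def sigmaPL (a : I → I → ℤ) (ι : ℕ → I) (x : ℕ → ℤ) (k : ℕ) : ℤ :=
  x k + ∑' j : ℕ, if k < j then a (ι k) (ι j) * x j else 0
/-- k^{(+)}: the next position after k carrying the same index. -/
def kplus (ι : ℕ → I) (k : ℕ) : ℕ := sInf {l | k < l ∧ ι l = ι k}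

/-- k^{(-)}: the previous position (≥ 1) carrying the same index, 0 if none. -/
def kminus (ι : ℕ → I) (k : ℕ) : ℕ := sSup {l | 0 < l ∧ l < k ∧ ι l = ι k}

/-- coefficient vector of the linear form β_k = x_k + Σ_{k<j<k^{(+)}} ⟨h_{i_k},α_{i_j}⟩ x_j + x_{k^{(+)}},
with β_0 = 0. -/
def betaF (a : I → I → ℤ) (ι : ℕ → I) (k : ℕ) : ℕ → ℚ := fun j =>
  if k = 0 then 0 else
    (if j = k then 1 else 0)
    + (if k < j ∧ j < kplus ι k then (a (ι k) (ι j) : ℚ) else 0)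
    + (if j = kplus ι k then 1 else 0)

/-- the piecewise-linear operator S_k on linear forms (coefficient vectors). -/
def Sop (a : I → I → ℤ) (ι : ℕ → I) (k : ℕ) (φ : ℕ → ℚ) : ℕ → ℚ :=
  if 0 < φ k then φ - φ k • betaF a ι k else φ - φ k • betaF a ι (kminus ι k)

/-- evaluation of a linear form at a point of ℤ^∞. -/
def evalF (φ : ℕ → ℚ) (x : ℕ → ℤ) : ℚ := ∑' l : ℕ, φ l * (x l : ℚ)

/-- the coordinate linear form x_m. -/
def coordF (m : ℕ) : ℕ → ℚ := fun l => if l = m then 1 else 0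

/-- the coordinate linear form x_{j;i}, with the convention x_{j;0} = x_{j;n+1} = 0. -/
def cX (n j i : ℕ) : ℕ → ℚ :=
  if 1 ≤ j ∧ 1 ≤ i ∧ i ≤ n then coordF (pos n j i) else 0
/-- Cartan matrix of type B_n: a_{n-1,n} = -2, a_{n,n-1} = -1. -/
def aB (n : ℕ) (i j : ℕ) : ℤ :=
  if i = j then 2
  else if i + 1 = j then (if j = n then -2 else -1)
  else if j + 1 = i then -1
  else 0

/-- Cartan matrix of type C_n: a_{n-1,n} = -1, a_{n,n-1} = -2. -/
def aC (n : ℕ) (i j : ℕ) : ℤ :=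
  if i = j then 2
  else if i + 1 = j then -1
  else if j + 1 = i then (if i = n then -2 else -1)
  else 0

/-- Cartan matrix of type D_n. -/
def aD (n : ℕ) (i j : ℕ) : ℤ :=
  if i = j then 2
  else if (i + 1 = j ∧ j + 1 ≤ n) ∨ (j + 1 = i ∧ i + 1 ≤ n)
        ∨ (i + 2 = j ∧ j = n) ∨ (j + 2 = i ∧ i = n) then -1
  else 0

/-- Cartan matrix of type F_4: a_{23} = -2, a_{32} = -1. -/
def aF4 (i j : ℕ) : ℤ :=
  if i = j then 2
  else if i = 2 ∧ j = 3 then -2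
  else if i + 1 = j ∨ j + 1 = i then -1
  else 0
/-- φ_{j;k} for types B_n and C_n:
φ_{j;0} = id, φ_{j;k} = S_{j;k}⋯S_{j;1} (1 ≤ k ≤ n-1),
φ_{j;k} = S_{j+k-n;2n-k}⋯S_{j;n} φ_{j;n-1} (n ≤ k ≤ 2n-1). -/
def phiBC (a : ℕ → ℕ → ℤ) (n j : ℕ) : ℕ → (ℕ → ℚ) → (ℕ → ℚ)
  | 0 => id
  | k + 1 => fun φ =>
      if k + 1 ≤ n - 1 then
        Sop a (iotaSeq n) (pos n j (k + 1)) (phiBC a n j k φ)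
      else
        Sop a (iotaSeq n) (pos n (j + (k + 1) - n) (2 * n - (k + 1))) (phiBC a n j k φ)

section Aux

lemma pos_one_le {n j i : ℕ} (hi : 1 ≤ i) : 1 ≤ pos n j i := by
  unfold pos; omega

lemma pos_lt_pos {n j i m l : ℕ} (hj : 1 ≤ j) (hin : i ≤ n) (hl1 : 1 ≤ l)
    (hlt : j < m) : pos n j i < pos n m l := by
  unfold pos
  have h1 : j ≤ m - 1 := by omega
  have h2 : j * n ≤ (m - 1) * n := Nat.mul_le_mul_right n h1
  have h3 : (j - 1) * n + n = j * n := by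
    have hj' : j - 1 + 1 = j := by omega
    calc (j-1)*n + n = (j-1+1)*n := by ring
      _ = j*n := by rw [hj']
  omega

lemma pos_inj {n j i m l : ℕ} (hj : 1 ≤ j) (hm : 1 ≤ m)
    (hi1 : 1 ≤ i) (hin : i ≤ n) (hl1 : 1 ≤ l) (hln : l ≤ n)
    (h : pos n j i = pos n m l) : j = m ∧ i = l := by
  rcases lt_trichotomy j m with hlt | heq | hgt
  · exact absurd h (Nat.ne_of_lt (pos_lt_pos hj hin hl1 hlt))
  · subst heq
    unfold pos at h
    omega
  · exact absurd h.symm (Nat.ne_of_lt (pos_lt_pos hm hln hi1 hgt))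

lemma pos_lt_iff {n j i m l : ℕ} (hj : 1 ≤ j) (hm : 1 ≤ m)
    (hi1 : 1 ≤ i) (hin : i ≤ n) (hl1 : 1 ≤ l) (hln : l ≤ n) :
    pos n j i < pos n m l ↔ j < m ∨ (j = m ∧ i < l) := by
  constructor
  · intro h
    rcases lt_trichotomy j m with hlt | heq | hgt
    · exact Or.inl hlt
    · subst heq; right; refine ⟨rfl, ?_⟩; unfold pos at h; omega
    · exact absurd (pos_lt_pos hm hln hi1 hgt) (by omega)
  · rintro (hlt | ⟨rfl, hil⟩)
    · exact pos_lt_pos hj hin hl1 hlt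
    · unfold pos; omega

lemma cX_apply' {n j i m l : ℕ} (hj : 1 ≤ j) (hm : 1 ≤ m) (hl1 : 1 ≤ l) (hln : l ≤ n) :
    cX n j i (pos n m l) = if j = m ∧ i = l then 1 else 0 := by
  unfold cX coordF
  by_cases hi : 1 ≤ i ∧ i ≤ n
  · rw [if_pos ⟨hj, hi.1, hi.2⟩]
    by_cases h : j = m ∧ i = l
    · rw [if_pos (by rw [h.1, h.2]), if_pos h]
    · rw [if_neg, if_neg h]
      intro he
      obtain ⟨h1, h2⟩ := pos_inj hm hj hl1 hln hi.1 hi.2 he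
      exact h ⟨h1.symm, h2.symm⟩
  · rw [if_neg (by tauto)]
    rw [if_neg (by rintro ⟨rfl, rfl⟩; omega)]
    rfl

lemma cX_invalid {n j i : ℕ} (h : ¬ (1 ≤ j ∧ 1 ≤ i ∧ i ≤ n)) : cX n j i = 0 := by
  unfold cX; rw [if_neg h]

lemma cX_apply_zero {n j i : ℕ} : cX n j i 0 = 0 := by
  unfold cX coordF
  split
  · rename_i h
    have := pos_one_le (n := n) (j := j) h.2.1
    simp only []
    rw [if_neg (by omega)]
  · rfl

lemma iota_posn {n m i : ℕ} (hi1 : 1 ≤ i) (hin : i ≤ n) : iotaSeq n (pos n m i) = i := by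
  unfold iotaSeq pos
  have h : (m-1)*n + i - 1 = (i - 1) + (m-1) * n := by omega
  rw [h, Nat.add_mul_mod_self_right, Nat.mod_eq_of_lt (by omega)]
  omega

lemma mod_step {a b n : ℕ} (hn : 1 ≤ n) (h : a < b) (hm : a % n = b % n) : a + n ≤ b := by
  have ha := Nat.div_add_mod a n
  have hb := Nat.div_add_mod b n
  have hdiv : a / n < b / n := by
    by_contra hc
    push_neg at hc
    have : n * (b/n) ≤ n * (a/n) := Nat.mul_le_mul_left n hc
    omega
  have h2 : a/n + 1 ≤ b/n := hdiv
  have h3 : n * (a/n + 1) ≤ n * (b/n) := Nat.mul_le_mul_left n h2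
  rw [Nat.mul_add, Nat.mul_one] at h3
  omega

lemma iota_eq_mod {n k l : ℕ} (h : iotaSeq n l = iotaSeq n k) : (l - 1) % n = (k - 1) % n := by
  unfold iotaSeq at h
  omega

lemma pos_succ_row {n m i : ℕ} (hm : 1 ≤ m) : pos n (m+1) i = pos n m i + n := by
  unfold pos
  have h : m + 1 - 1 = (m - 1) + 1 := by omega
  rw [h]
  ring

lemma kplus_posn {n m i : ℕ} (hn : 1 ≤ n) (hm : 1 ≤ m) (hi1 : 1 ≤ i) (hin : i ≤ n) :
    kplus (iotaSeq n) (pos n m i) = pos n (m+1) i := by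
  unfold kplus
  have hrow := pos_succ_row (n := n) (i := i) hm
  have hmem : pos n (m+1) i ∈ {l | pos n m i < l ∧ iotaSeq n l = iotaSeq n (pos n m i)} := by
    refine ⟨by omega, ?_⟩
    rw [iota_posn hi1 hin, iota_posn hi1 hin]
  refine le_antisymm (Nat.sInf_le hmem) ?_
  refine le_csInf ⟨_, hmem⟩ ?_
  rintro l ⟨hl1, hl2⟩
  have hp1 := pos_one_le (n := n) (j := m) (i := i) hi1
  have hms := mod_step hn (a := pos n m i - 1) (b := l - 1) (by omega) (iota_eq_mod hl2).symm
  omega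

lemma kminus_posn {n m i : ℕ} (hn : 1 ≤ n) (hm : 2 ≤ m) (hi1 : 1 ≤ i) (hin : i ≤ n) :
    kminus (iotaSeq n) (pos n m i) = pos n (m-1) i := by
  unfold kminus
  have hrow : pos n m i = pos n (m-1) i + n := by
    have := pos_succ_row (n := n) (i := i) (m := m - 1) (by omega)
    have hm1 : m - 1 + 1 = m := by omega
    rw [hm1] at this
    omega
  have hmem : pos n (m-1) i ∈ {l | 0 < l ∧ l < pos n m i ∧ iotaSeq n l = iotaSeq n (pos n m i)} := by
    refine ⟨pos_one_le hi1, by omega, ?_⟩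
    rw [iota_posn hi1 hin, iota_posn hi1 hin]
  refine le_antisymm ?_ (le_csSup ⟨pos n m i, fun l hl => le_of_lt hl.2.1⟩ hmem)
  refine csSup_le ⟨_, hmem⟩ ?_
  rintro l ⟨hl0, hl1, hl2⟩
  have hms := mod_step (a := l - 1) (b := pos n m i - 1) hn (by have := pos_one_le (n:=n) (j:=m) (i:=i) hi1; omega) (iota_eq_mod hl2)
  omega


lemma pos_eq_iff {n j i m l : ℕ} (hj : 1 ≤ j) (hm : 1 ≤ m)
    (hi1 : 1 ≤ i) (hin : i ≤ n) (hl1 : 1 ≤ l) (hln : l ≤ n) :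
    pos n j i = pos n m l ↔ j = m ∧ i = l :=
  ⟨pos_inj hj hm hi1 hin hl1 hln, by rintro ⟨rfl, rfl⟩; rfl⟩

lemma exists_rep {n r : ℕ} (hn : 1 ≤ n) (hr : 1 ≤ r) :
    ∃ m' i', 1 ≤ m' ∧ 1 ≤ i' ∧ i' ≤ n ∧ r = pos n m' i' := by
  refine ⟨(r-1)/n + 1, (r-1) % n + 1, Nat.succ_le_succ (Nat.zero_le _),
    Nat.succ_le_succ (Nat.zero_le _), ?_, ?_⟩
  · have := Nat.mod_lt (r-1) (show 0 < n by omega)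
    omega
  · unfold pos
    simp only [Nat.add_sub_cancel]
    obtain ⟨q, rem, hq, hrem, heq⟩ : ∃ q rem, q = (r-1)/n ∧ rem = (r-1)%n ∧ n * q + rem = r - 1 :=
      ⟨_, _, rfl, rfl, Nat.div_add_mod (r-1) n⟩
    rw [← hq, ← hrem]
    have hmc : q * n = n * q := Nat.mul_comm _ _
    omega

lemma beta_eq {n m i : ℕ} (hn : 2 ≤ n) (hm : 1 ≤ m) (hi1 : 1 ≤ i) (hin : i ≤ n) :
    betaF (aB n) (iotaSeq n) (pos n m i)
      = cX n m i + (if i + 1 = n then (-2 : ℚ) else -1) • cX n m (i+1)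
        + (-1 : ℚ) • cX n (m+1) (i-1) + cX n (m+1) i := by
  have hp1 := pos_one_le (n := n) (j := m) (i := i) hi1
  have hk0 : pos n m i ≠ 0 := by omega
  have hkp := kplus_posn (n := n) (m := m) (i := i) (by omega) hm hi1 hin
  have hp2 := pos_one_le (n := n) (j := m+1) (i := i) hi1
  funext r
  rcases Nat.eq_zero_or_pos r with rfl | hr
  · unfold betaF
    rw [if_neg hk0, hkp]
    rw [if_neg (by omega), if_neg (fun h => absurd h.1 (Nat.not_lt_zero _)),
      if_neg (by omega)]
    simp only [Pi.add_apply, Pi.smul_apply, cX_apply_zero, smul_zero, add_zero, zero_add]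
  · obtain ⟨m', i', hm', hi'1, hi'n, rfl⟩ := exists_rep (show 1 ≤ n by omega) hr
    unfold betaF
    rw [if_neg hk0, hkp]
    rw [iota_posn hi1 hin, iota_posn hi'1 hi'n]
    have e1 : (pos n m' i' = pos n m i) ↔ (m' = m ∧ i' = i) :=
      pos_eq_iff hm' hm hi'1 hi'n hi1 hin
    have e2 : (pos n m' i' = pos n (m+1) i) ↔ (m' = m + 1 ∧ i' = i) :=
      pos_eq_iff hm' (by omega) hi'1 hi'n hi1 hin
    have e3 : (pos n m i < pos n m' i') ↔ (m < m' ∨ (m = m' ∧ i < i')) :=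
      pos_lt_iff hm hm' hi1 hin hi'1 hi'n
    have e4 : (pos n m' i' < pos n (m+1) i) ↔ (m' < m + 1 ∨ (m' = m + 1 ∧ i' < i)) :=
      pos_lt_iff hm' (by omega) hi'1 hi'n hi1 hin
    simp only [Pi.add_apply, Pi.smul_apply, smul_eq_mul,
      cX_apply' hm hm' hi'1 hi'n, cX_apply' (show 1 ≤ m + 1 by omega) hm' hi'1 hi'n,
      e1, e2, e3, e4]
    have hcl : (m' = m ∧ i' = i) ∨ (m' = m ∧ i' = i+1) ∨ (m' = m+1 ∧ i'+1 = i) ∨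
        (m' = m+1 ∧ i' = i) ∨ ((m' = m ∧ i+1 < i') ∨ (m' = m+1 ∧ i'+1 < i)) ∨
        (¬(m' = m ∧ i ≤ i') ∧ ¬(m' = m+1 ∧ i' ≤ i)) := by omega
    rcases hcl with h1 | h2 | h3 | h4 | h5 | h6
    · rw [if_pos h1,
        if_neg (show ¬((m < m' ∨ m = m' ∧ i < i') ∧ (m' < m + 1 ∨ m' = m + 1 ∧ i' < i)) by omega),
        if_neg (show ¬(m' = m + 1 ∧ i' = i) by omega),
        if_pos (show m = m' ∧ i = i' by omega),
        if_neg (show ¬(m = m' ∧ i + 1 = i') by omega),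
        if_neg (show ¬(m + 1 = m' ∧ i - 1 = i') by omega),
        if_neg (show ¬(m + 1 = m' ∧ i = i') by omega)]
      split_ifs <;> norm_num
    · rw [if_neg (show ¬(m' = m ∧ i' = i) by omega),
        if_pos (show (m < m' ∨ m = m' ∧ i < i') ∧ (m' < m + 1 ∨ m' = m + 1 ∧ i' < i) by omega),
        if_neg (show ¬(m' = m + 1 ∧ i' = i) by omega),
        if_neg (show ¬(m = m' ∧ i = i') by omega),
        if_pos (show m = m' ∧ i + 1 = i' by omega),
        if_neg (show ¬(m + 1 = m' ∧ i - 1 = i') by omega),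
        if_neg (show ¬(m + 1 = m' ∧ i = i') by omega), h2.2,
        show aB n i (i+1) = if i + 1 = n then -2 else -1 by
          unfold aB; rw [if_neg (by omega), if_pos rfl]]
      split_ifs <;> norm_num
    · rw [if_neg (show ¬(m' = m ∧ i' = i) by omega),
        if_pos (show (m < m' ∨ m = m' ∧ i < i') ∧ (m' < m + 1 ∨ m' = m + 1 ∧ i' < i) by omega),
        if_neg (show ¬(m' = m + 1 ∧ i' = i) by omega),
        if_neg (show ¬(m = m' ∧ i = i') by omega),
        if_neg (show ¬(m = m' ∧ i + 1 = i') by omega),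
        if_pos (show m + 1 = m' ∧ i - 1 = i' by omega),
        if_neg (show ¬(m + 1 = m' ∧ i = i') by omega),
        show aB n i i' = -1 by
          unfold aB; rw [if_neg (by omega), if_neg (by omega), if_pos (by omega)]]
      split_ifs <;> norm_num
    · rw [if_neg (show ¬(m' = m ∧ i' = i) by omega),
        if_neg (show ¬((m < m' ∨ m = m' ∧ i < i') ∧ (m' < m + 1 ∨ m' = m + 1 ∧ i' < i)) by omega),
        if_pos (show m' = m + 1 ∧ i' = i by omega),
        if_neg (show ¬(m = m' ∧ i = i') by omega),
        if_neg (show ¬(m = m' ∧ i + 1 = i') by omega),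
        if_neg (show ¬(m + 1 = m' ∧ i - 1 = i') by omega),
        if_pos (show m + 1 = m' ∧ i = i' by omega)]
      split_ifs <;> norm_num
    · rw [if_neg (show ¬(m' = m ∧ i' = i) by omega),
        if_pos (show (m < m' ∨ m = m' ∧ i < i') ∧ (m' < m + 1 ∨ m' = m + 1 ∧ i' < i) by omega),
        if_neg (show ¬(m' = m + 1 ∧ i' = i) by omega),
        if_neg (show ¬(m = m' ∧ i = i') by omega),
        if_neg (show ¬(m = m' ∧ i + 1 = i') by omega),
        if_neg (show ¬(m + 1 = m' ∧ i - 1 = i') by omega),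
        if_neg (show ¬(m + 1 = m' ∧ i = i') by omega),
        show aB n i i' = 0 by
          unfold aB; rw [if_neg (by omega), if_neg (by omega), if_neg (by omega)]]
      split_ifs <;> norm_num
    · rw [if_neg (show ¬(m' = m ∧ i' = i) by omega),
        if_neg (show ¬((m < m' ∨ m = m' ∧ i < i') ∧ (m' < m + 1 ∨ m' = m + 1 ∧ i' < i)) by omega),
        if_neg (show ¬(m' = m + 1 ∧ i' = i) by omega),
        if_neg (show ¬(m = m' ∧ i = i') by omega),
        if_neg (show ¬(m = m' ∧ i + 1 = i') by omega),
        if_neg (show ¬(m + 1 = m' ∧ i - 1 = i') by omega),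
        if_neg (show ¬(m + 1 = m' ∧ i = i') by omega)]
      split_ifs <;> norm_num


end Aux

def Ff (n j k : ℕ) : ℕ → ℚ :=
  if k ≤ n - 1 then
    (if k = n - 1 then (2:ℚ) else 1) • cX n j (k+1) - cX n (j+1) k
  else
    cX n (j + k + 1 - n) (2*n - k - 1)
      - (if k = n then (2:ℚ) else 1) • cX n (j + k + 1 - n) (2*n - k)

def Pp (n j k : ℕ) : ℕ := if k ≤ n - 1 then pos n j k else pos n (j + k - n) (2*n - k)

def cc (n k : ℕ) : ℚ := if k = n then 2 else 1

lemma cc_pos {n k : ℕ} : 0 < cc n k := by unfold cc; split_ifs <;> norm_num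

lemma Sop_zero {a : ℕ → ℕ → ℤ} {ι : ℕ → ℕ} {m : ℕ} {φ : ℕ → ℚ} (h : φ m = 0) :
    Sop a ι m φ = φ := by
  unfold Sop
  rw [h]
  simp

lemma step_id {n j k : ℕ} (hn : 2 ≤ n) (hj : 1 ≤ j) (hk1 : 1 ≤ k) (hk : k ≤ 2*n - 1) :
    Ff n j (k-1) (Pp n j k) = cc n k ∧
      Ff n j (k-1) - cc n k • betaF (aB n) (iotaSeq n) (Pp n j k) = Ff n j k := by
  rcases show (k ≤ n - 1) ∨ (k = n) ∨ (n + 1 ≤ k) by omega with hc | hc | hc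
  · have hP : Pp n j k = pos n j k := by unfold Pp; rw [if_pos hc]
    have hF1 : Ff n j (k-1) = cX n j k - cX n (j+1) (k-1) := by
      unfold Ff
      rw [if_pos (by omega), if_neg (by omega), show k - 1 + 1 = k by omega, one_smul]
    have hcc : cc n k = 1 := by unfold cc; rw [if_neg (by omega)]
    have hbeta := beta_eq (m := j) (i := k) hn hj hk1 (by omega)
    constructor
    · rw [hP, hF1, Pi.sub_apply,
        cX_apply' hj hj hk1 (by omega), cX_apply' (show 1 ≤ j + 1 by omega) hj hk1 (by omega),
        if_pos (show j = j ∧ k = k from ⟨rfl, rfl⟩),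
        if_neg (show ¬(j + 1 = j ∧ k - 1 = k) by omega), hcc]
      norm_num
    · have hFk : Ff n j k = (if k = n-1 then (2:ℚ) else 1) • cX n j (k+1) - cX n (j+1) k := by
        unfold Ff; rw [if_pos hc]
      rw [hP, hF1, hcc, hbeta, one_smul, hFk,
        show (if k + 1 = n then (-2:ℚ) else -1) = -(if k = n-1 then (2:ℚ) else 1) from by
          split_ifs <;> first | (exfalso; omega) | norm_num]
      funext r
      simp only [Pi.sub_apply, Pi.add_apply, Pi.smul_apply, smul_eq_mul]
      ring
  · rw [hc]
    have hP : Pp n j n = pos n j n := by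
      unfold Pp
      rw [if_neg (by omega), show j + n - n = j by omega, show 2*n - n = n by omega]
    have hF1 : Ff n j (n-1) = (2:ℚ) • cX n j n - cX n (j+1) (n-1) := by
      unfold Ff
      rw [if_pos (by omega), if_pos rfl, show n - 1 + 1 = n by omega]
    have hcc : cc n n = 2 := by unfold cc; rw [if_pos rfl]
    have hbeta := beta_eq (m := j) (i := n) hn hj (by omega) (le_refl n)
    rw [cX_invalid (show ¬(1 ≤ j ∧ 1 ≤ n + 1 ∧ n + 1 ≤ n) by omega), smul_zero, add_zero]
      at hbeta
    constructor
    · rw [hP, hF1, Pi.sub_apply, Pi.smul_apply, smul_eq_mul,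
        cX_apply' hj hj (by omega) (le_refl n),
        cX_apply' (show 1 ≤ j+1 by omega) hj (by omega) (le_refl n),
        if_pos (show j = j ∧ n = n from ⟨rfl, rfl⟩),
        if_neg (show ¬(j + 1 = j ∧ n - 1 = n) by omega), hcc]
      norm_num
    · have hFk : Ff n j n = cX n (j+1) (n-1) - (2:ℚ) • cX n (j+1) n := by
        unfold Ff
        rw [if_neg (by omega), if_pos rfl, show j + n + 1 - n = j + 1 by omega,
          show 2*n - n - 1 = n - 1 by omega, show 2*n - n = n by omega]
      rw [hP, hF1, hcc, hbeta, hFk]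
      funext r
      simp only [Pi.sub_apply, Pi.add_apply, Pi.smul_apply, smul_eq_mul]
      ring
  · have h1n : 1 ≤ j + k - n := by omega
    have hP : Pp n j k = pos n (j + k - n) (2*n - k) := by unfold Pp; rw [if_neg (by omega)]
    have hF1 : Ff n j (k-1) = cX n (j+k-n) (2*n - k)
        - (if k - 1 = n then (2:ℚ) else 1) • cX n (j+k-n) (2*n - k + 1) := by
      unfold Ff
      rw [if_neg (by omega), show j + (k-1) + 1 - n = j + k - n by omega,
        show 2*n - (k-1) - 1 = 2*n - k by omega, show 2*n - (k-1) = 2*n - k + 1 by omega]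
    have hcc : cc n k = 1 := by unfold cc; rw [if_neg (by omega)]
    have hbeta := beta_eq (m := j + k - n) (i := 2*n - k) hn h1n (by omega) (by omega)
    constructor
    · rw [hP, hF1, Pi.sub_apply, Pi.smul_apply, smul_eq_mul,
        cX_apply' h1n h1n (by omega) (by omega),
        cX_apply' h1n h1n (by omega) (by omega),
        if_pos (show j+k-n = j+k-n ∧ 2*n-k = 2*n-k from ⟨rfl, rfl⟩),
        if_neg (show ¬(j+k-n = j+k-n ∧ 2*n-k+1 = 2*n-k) by omega), hcc]
      norm_num
    · have hFk : Ff n j k = cX n (j + k - n + 1) (2*n - k - 1) - cX n (j + k - n + 1) (2*n - k) := by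
        unfold Ff
        rw [if_neg (show ¬(k ≤ n - 1) by omega), if_neg (show ¬(k = n) by omega), one_smul,
          show j + k + 1 - n = j + k - n + 1 by omega]
      rw [hP, hF1, hcc, hbeta, one_smul, hFk,
        show (if 2*n - k + 1 = n then (-2:ℚ) else -1) = -(if k - 1 = n then (2:ℚ) else 1) from by
          split_ifs <;> first | (exfalso; omega) | norm_num]
      funext r
      simp only [Pi.sub_apply, Pi.add_apply, Pi.smul_apply, smul_eq_mul]
      ring

lemma phi_eq {n j : ℕ} (hn : 2 ≤ n) (hj : 1 ≤ j) :
    ∀ k, k ≤ 2*n - 1 → phiBC (aB n) n j k (cX n j 1) = Ff n j k := by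
  intro k
  induction k with
  | zero =>
    intro _
    simp only [phiBC, id_eq]
    unfold Ff
    rw [if_pos (show 0 ≤ n - 1 by omega), if_neg (show ¬(0 = n - 1) by omega), one_smul,
      cX_invalid (show ¬(1 ≤ j + 1 ∧ 1 ≤ 0 ∧ 0 ≤ n) by omega), sub_zero]
  | succ k ih =>
    intro hk
    have hstep := step_id hn hj (k := k+1) (by omega) hk
    rw [Nat.add_sub_cancel] at hstep
    have hrw : phiBC (aB n) n j (k+1) (cX n j 1)
        = Sop (aB n) (iotaSeq n) (Pp n j (k+1)) (phiBC (aB n) n j k (cX n j 1)) := by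
      simp only [phiBC]
      unfold Pp
      split_ifs <;> rfl
    rw [hrw, ih (by omega)]
    unfold Sop
    rw [hstep.1, if_pos cc_pos, hstep.2]

lemma Ff_apply {n j k m l : ℕ} (hn : 2 ≤ n) (hj : 1 ≤ j) (hm : 1 ≤ m) (hl1 : 1 ≤ l)
    (hln : l ≤ n) :
    Ff n j k (pos n m l) =
      if k ≤ n - 1 then
        (if k = n-1 then (2:ℚ) else 1) * (if j = m ∧ k+1 = l then 1 else 0)
          - (if j+1 = m ∧ k = l then 1 else 0)
      else
        (if j+k+1-n = m ∧ 2*n-k-1 = l then 1 else 0)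
          - (if k = n then (2:ℚ) else 1) * (if j+k+1-n = m ∧ 2*n-k = l then 1 else 0) := by
  unfold Ff
  by_cases h : k ≤ n - 1
  · rw [if_pos h, if_pos h]
    simp only [Pi.sub_apply, Pi.smul_apply, smul_eq_mul,
      cX_apply' hj hm hl1 hln, cX_apply' (show 1 ≤ j+1 by omega) hm hl1 hln]
  · rw [if_neg h, if_neg h]
    simp only [Pi.sub_apply, Pi.smul_apply, smul_eq_mul,
      cX_apply' (show 1 ≤ j+k+1-n by omega) hm hl1 hln]

lemma Ff_sign {n j k m l : ℕ} (hn : 2 ≤ n) (hj : 1 ≤ j) (hk : k ≤ 2*n-1) (hm : 1 ≤ m)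
    (hl1 : 1 ≤ l) (hln : l ≤ n) :
    (Ff n j k (pos n m l) = 0)
    ∨ (Ff n j k (pos n m l) = cc n (k+1) ∧ k + 1 ≤ 2*n - 1 ∧ pos n m l = Pp n j (k+1))
    ∨ (Ff n j k (pos n m l) = -cc n k ∧ 1 ≤ k ∧
        kminus (iotaSeq n) (pos n m l) = Pp n j k) := by
  have hval := Ff_apply (k := k) hn hj hm hl1 hln
  by_cases hcase : k ≤ n - 1
  · rw [if_pos hcase] at hval
    by_cases hB : j = m ∧ k + 1 = l
    · obtain ⟨rfl, rfl⟩ := hB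
      right; left
      rw [if_pos (show j = j ∧ k + 1 = k + 1 from ⟨rfl, rfl⟩),
        if_neg (show ¬(j + 1 = j ∧ k = k + 1) by omega)] at hval
      refine ⟨?_, by omega, ?_⟩
      · rw [hval]; unfold cc; split_ifs <;> first | (exfalso; omega) | norm_num
      · unfold Pp
        by_cases h2 : k + 1 ≤ n - 1
        · rw [if_pos h2]
        · rw [if_neg h2, show j + (k+1) - n = j by omega, show 2*n - (k+1) = n by omega,
            show k + 1 = n by omega]
    · by_cases hC : j + 1 = m ∧ k = l
      · obtain ⟨rfl, rfl⟩ := hC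
        right; right
        rw [if_neg (show ¬(j = j + 1 ∧ k + 1 = k) by omega),
          if_pos (show j + 1 = j + 1 ∧ k = k from ⟨rfl, rfl⟩)] at hval
        refine ⟨?_, by omega, ?_⟩
        · rw [hval]; unfold cc; rw [if_neg (show ¬(k = n) by omega)]
          split_ifs <;> norm_num
        · rw [kminus_posn (by omega) (by omega) (by omega) (by omega)]
          unfold Pp
          rw [if_pos hcase, show j + 1 - 1 = j by omega]
      · left
        rw [if_neg hB, if_neg hC] at hval
        rw [hval]
        split_ifs <;> norm_num
  · rw [if_neg hcase] at hval
    by_cases hB : j + k + 1 - n = m ∧ 2*n - k - 1 = l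
    · obtain ⟨rfl, rfl⟩ := hB
      right; left
      rw [if_pos (show j+k+1-n = j+k+1-n ∧ 2*n-k-1 = 2*n-k-1 from ⟨rfl, rfl⟩),
        if_neg (show ¬(j+k+1-n = j+k+1-n ∧ 2*n-k = 2*n-k-1) by omega)] at hval
      refine ⟨?_, by omega, ?_⟩
      · rw [hval]; unfold cc; rw [if_neg (show ¬(k + 1 = n) by omega)]
        split_ifs <;> norm_num
      · unfold Pp
        rw [if_neg (by omega), show j + (k+1) - n = j + k + 1 - n by omega,
          show 2*n - (k+1) = 2*n - k - 1 by omega]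
    · by_cases hC : j + k + 1 - n = m ∧ 2*n - k = l
      · obtain ⟨rfl, rfl⟩ := hC
        right; right
        rw [if_neg (show ¬(j+k+1-n = j+k+1-n ∧ 2*n-k-1 = 2*n-k) by omega),
          if_pos (show j+k+1-n = j+k+1-n ∧ 2*n-k = 2*n-k from ⟨rfl, rfl⟩)] at hval
        refine ⟨?_, by omega, ?_⟩
        · rw [hval]; unfold cc; split_ifs <;> norm_num
        · rw [kminus_posn (by omega) (by omega) (by omega) (by omega)]
          unfold Pp
          rw [if_neg hcase, show j + k + 1 - n - 1 = j + k - n by omega]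
      · left
        rw [if_neg hB, if_neg hC] at hval
        rw [hval]
        split_ifs <;> norm_num



theorem typeB_Xi_closed (n : ℕ) (hn : 2 ≤ n) (j : ℕ) (hj : 1 ≤ j)
    (k : ℕ) (hk : k ≤ 2 * n - 1) (m l : ℕ) (hm : 1 ≤ m) (hl : 1 ≤ l) (hln : l ≤ n) :
    Sop (aB n) (iotaSeq n) (pos n m l) (phiBC (aB n) n j k (cX n j 1)) =
        phiBC (aB n) n j (k - 1) (cX n j 1) ∨
    Sop (aB n) (iotaSeq n) (pos n m l) (phiBC (aB n) n j k (cX n j 1)) =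
        phiBC (aB n) n j (k + 1) (cX n j 1) ∨
    Sop (aB n) (iotaSeq n) (pos n m l) (phiBC (aB n) n j k (cX n j 1)) =
        phiBC (aB n) n j k (cX n j 1) := by
  have hphi := phi_eq hn hj k hk
  rcases Ff_sign (j := j) (k := k) hn hj hk hm hl hln with h0 | hP | hN
  · right; right
    rw [hphi]
    exact Sop_zero h0
  · right; left
    rw [hphi, phi_eq hn hj (k+1) hP.2.1]
    unfold Sop
    rw [hP.1, if_pos cc_pos, hP.2.2]
    have hstep := step_id hn hj (k := k+1) (by omega) hP.2.1
    rw [Nat.add_sub_cancel] at hstep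
    exact hstep.2
  · left
    rw [hphi, phi_eq hn hj (k-1) (by omega)]
    unfold Sop
    rw [hN.1, if_neg (by have := cc_pos (n := n) (k := k); intro hcon; linarith),
      hN.2.2, neg_smul, sub_neg_eq_add]
    have hstep := step_id hn hj hN.2.1 hk
    rw [← hstep.2]
    abel
end
end

section
/- For type B_n, the set Σ_ι = { x ∈ ℤ^∞_{≥0 support} : φ(x) ≥ 0 for all φ ∈ Ξ_ι } is exactly the set of (x_{j;i}) satisfying: x_{j;i} = 0 unless 1 ≤ j,i ≤ n; x_{1;i} ≥ x_{2;i−1} ≥ ⋯ ≥ x_{i;1} ≥ 0 for 1 ≤ i ≤ n−1; x_{j;n} ≥ x_{j+1;n−1} ≥ ⋯ ≥ x_{n;j} ≥ 0 for 1 ≤ j ≤ n; and x_{j;n−j+1} ≥ x_{j;n−j+2} ≥ ⋯ ≥ x_{j;n} ≥ 0 for 2 ≤ j ≤ n. -/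
open scoped Classical

noncomputable section

variable {I : Type*}

/-- doubly-indexed coordinate with out-of-range convention x_{j;0} = x_{j;n+1} = 0. -/
def Yc (n : ℕ) (y : ℕ → ℕ → ℤ) (j i : ℕ) : ℤ :=
  if 1 ≤ j ∧ 1 ≤ i ∧ i ≤ n then y j i else 0
theorem typeB_polyhedral_realization (n : ℕ) (hn : 2 ≤ n) (y : ℕ → ℕ → ℤ)
    (hconv : ∀ j i, j = 0 ∨ i = 0 ∨ n < i → y j i = 0)
    (hfin : ∃ N, ∀ j, N ≤ j → ∀ i, y j i = 0) :
    (∀ j k : ℕ, 1 ≤ j → k ≤ 2 * n - 1 →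
      0 ≤ (if k ≤ n - 1 then Yc n y j (k + 1) - Yc n y (j + 1) k
           else Yc n y (j + k - n + 1) (2 * n - k - 1) - Yc n y (j + k - n + 1) (2 * n - k)))
    ↔
    ((∀ j i, ¬(1 ≤ j ∧ j ≤ n ∧ 1 ≤ i ∧ i ≤ n) → y j i = 0) ∧
     (∀ i, 1 ≤ i → i ≤ n - 1 →
        (∀ t, 1 ≤ t → t < i → y (t + 1) (i - t) ≤ y t (i - t + 1)) ∧ 0 ≤ y i 1) ∧
     (∀ j, 1 ≤ j → j ≤ n →
        (∀ t, j ≤ t → t < n → y (t + 1) (n + j - t - 1) ≤ y t (n + j - t)) ∧ 0 ≤ y n j) ∧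
     (∀ j, 2 ≤ j → j ≤ n →
        (∀ i, n - j + 1 ≤ i → i < n → y j (i + 1) ≤ y j i) ∧ 0 ≤ y j n)) := by
  have Ye : ∀ j i, Yc n y j i = y j i := by
    intro j i
    unfold Yc
    split
    · rfl
    · next h => exact (hconv j i (by omega)).symm
  simp only [Ye]
  constructor
  · intro H
    -- anti-diagonal inequalities
    have h1 : ∀ j k, 1 ≤ j → k ≤ n - 1 → y (j+1) k ≤ y j (k+1) := by
      intro j k hj hk
      have h := H j k hj (by omega)
      rw [if_pos hk] at h
      linarith
    -- column inequalities
    have h2 : ∀ j m, 1 ≤ j → 1 ≤ m → m ≤ n → y (j+m) (n-m+1) ≤ y (j+m) (n-m) := by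
      intro j m hj hm1 hm2
      have h := H j (m+n-1) hj (by omega)
      rw [if_neg (by omega)] at h
      rw [show j + (m+n-1) - n + 1 = j + m from by omega,
          show 2*n - (m+n-1) - 1 = n - m from by omega,
          show 2*n - (m+n-1) = n - m + 1 from by omega] at h
      linarith
    have y1pos : ∀ j, 1 ≤ j → 0 ≤ y j 1 := by
      intro j hj
      have h := h1 j 0 hj (by omega)
      have h0 : y (j+1) 0 = 0 := hconv _ _ (Or.inr (Or.inl rfl))
      linarith
    have hge0 : ∀ i j, 1 ≤ j → 1 ≤ i → i ≤ n → 0 ≤ y j i := by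
      intro i
      induction i with
      | zero => intro j _ h _; exact absurd h (by omega)
      | succ i ih =>
        intro j hj _ hin
        rcases Nat.eq_zero_or_pos i with h0 | h0
        · subst h0; exact y1pos j hj
        · have ha := h1 j i hj (by omega)
          have hb := ih (j+1) (by omega) h0 (by omega)
          linarith
    have col1zero : ∀ j, n < j → y j 1 = 0 := by
      intro j hjn
      have h := h2 (j - n) n (by omega) (by omega) le_rfl
      rw [show j - n + n = j from by omega,
          show n - n + 1 = 1 from by omega,
          show n - n = 0 from by omega] at h
      have h0 : y j 0 = 0 := hconv _ _ (Or.inr (Or.inl rfl))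
      have h1' := y1pos j (by omega)
      linarith
    have hdecj : ∀ j, n < j → ∀ i, 1 ≤ i → i ≤ n → y j i ≤ y j 1 := by
      intro j hjn i
      induction i with
      | zero => intro h _; exact absurd h (by omega)
      | succ i ih =>
        intro _ hin
        rcases Nat.eq_zero_or_pos i with h0 | h0
        · subst h0; exact le_rfl
        · have ha := h2 (j - (n - i)) (n - i) (by omega) (by omega) (by omega)
          rw [show j - (n-i) + (n-i) = j from by omega,
              show n - (n-i) + 1 = i + 1 from by omega,
              show n - (n-i) = i from by omega] at ha
          have hb := ih h0 (by omega)
          linarith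
    have hA : ∀ j i, ¬(1 ≤ j ∧ j ≤ n ∧ 1 ≤ i ∧ i ≤ n) → y j i = 0 := by
      intro j i h
      by_cases hc : j = 0 ∨ i = 0 ∨ n < i
      · exact hconv j i hc
      · have hjn : n < j := by omega
        have hi1 : 1 ≤ i := by omega
        have hin : i ≤ n := by omega
        have hd := hdecj j hjn i hi1 hin
        have hg := hge0 i j (by omega) hi1 hin
        have hz := col1zero j hjn
        linarith
    refine ⟨hA, ?_, ?_, ?_⟩
    · intro i hi1 hin
      refine ⟨?_, hge0 1 i hi1 le_rfl (by omega)⟩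
      intro t ht1 hti
      exact h1 t (i - t) ht1 (by omega)
    · intro j hj1 hjn
      refine ⟨?_, hge0 j n (by omega) hj1 hjn⟩
      intro t htj htn
      have h := h1 t (n + j - t - 1) (by omega) (by omega)
      rwa [show n + j - t - 1 + 1 = n + j - t from by omega] at h
    · intro j hj2 hjn
      refine ⟨?_, hge0 n j (by omega) (by omega) le_rfl⟩
      intro i hi1 hin
      have h := h2 (j - (n - i)) (n - i) (by omega) (by omega) (by omega)
      rwa [show j - (n-i) + (n-i) = j from by omega,
           show n - (n-i) + 1 = i + 1 from by omega,
           show n - (n-i) = i from by omega] at h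
  · rintro ⟨hA, hB, hC, hD⟩ j k hj hk
    by_cases hcase : k ≤ n - 1
    · rw [if_pos hcase]
      rcases Nat.eq_zero_or_pos k with h0 | h0
      · subst h0
        have hz : y (j+1) 0 = 0 := hconv _ _ (Or.inr (Or.inl rfl))
        have hp : 0 ≤ y j 1 := by
          by_cases hjn : j ≤ n
          · rcases eq_or_lt_of_le hjn with he | hlt
            · subst he
              exact (hC 1 le_rfl (by omega)).2
            · exact (hB j hj (by omega)).2
          · rw [hA j 1 (by omega)]
        linarith
      · by_cases hd : j + k ≤ n - 1
        · have h := (hB (j+k) (by omega) hd).1 j hj (by omega)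
          rw [show j + k - j = k from by omega] at h
          linarith
        · by_cases hjn : j < n
          · have h := (hC (j+k+1-n) (by omega) (by omega)).1 j (by omega) hjn
            rw [show n + (j+k+1-n) - j - 1 = k from by omega,
                show n + (j+k+1-n) - j = k + 1 from by omega] at h
            linarith
          · have hz : y (j+1) k = 0 := hA _ _ (by omega)
            have hp : 0 ≤ y j (k+1) := by
              by_cases hje : j = n
              · subst hje
                exact (hC (k+1) (by omega) (by omega)).2
              · rw [hA j (k+1) (by omega)]
            linarith
    · rw [if_neg hcase]
      by_cases hke : k = 2*n - 1
      · subst hke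
        rw [show 2*n - (2*n-1) - 1 = 0 from by omega,
            show 2*n - (2*n-1) = 1 from by omega]
        have h0 : y (j + (2*n-1) - n + 1) 0 = 0 := hconv _ _ (Or.inr (Or.inl rfl))
        have h1' : y (j + (2*n-1) - n + 1) 1 = 0 := hA _ _ (by omega)
        linarith
      · by_cases hAn : j + k - n + 1 ≤ n
        · have h := (hD (j + k - n + 1) (by omega) hAn).1 (2*n - k - 1) (by omega) (by omega)
          rw [show 2*n - k - 1 + 1 = 2*n - k from by omega] at h
          linarith
        · have e1 : y (j + k - n + 1) (2*n - k - 1) = 0 := hA _ _ (by omega)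
          have e2 : y (j + k - n + 1) (2*n - k) = 0 := hA _ _ (by omega)
          rw [e1, e2]
          simp
end
end

section
/- For type C_n, the polyhedral realization Σ_ι determined by the forms φ_{j;k}(x_{j;1}) is exactly the set of (x_{j;i}) with: x_{j;i}=0 unless 1 ≤ j,i ≤ n; x_{1;i} ≥ x_{2;i−1} ≥ ⋯ ≥ x_{i;1} ≥ 0 for 1 ≤ i ≤ n−1; 2x_{j;n} ≥ x_{j+1;n−1} ≥ ⋯ ≥ x_{n;j} ≥ 0 for 1 ≤ j ≤ n−1; and x_{j;n−j+1} ≥ x_{j;n−j+2} ≥ ⋯ ≥ x_{j;n−1} ≥ 2x_{j;n} ≥ 0 for 2 ≤ j ≤ n. -/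
open scoped Classical

noncomputable section

variable {I : Type*}

theorem typeC_polyhedral_realization (n : ℕ) (hn : 2 ≤ n) (y : ℕ → ℕ → ℤ)
    (hconv : ∀ j i, j = 0 ∨ i = 0 ∨ n < i → y j i = 0)
    (hfin : ∃ N, ∀ j, N ≤ j → ∀ i, y j i = 0) :
    (∀ j k : ℕ, 1 ≤ j → k ≤ 2 * n - 1 →
      0 ≤ (if k ≤ n - 2 then Yc n y j (k + 1) - Yc n y (j + 1) k
           else if k = n - 1 then 2 * Yc n y j n - Yc n y (j + 1) (n - 1)
           else if k = n then Yc n y (j + 1) (n - 1) - 2 * Yc n y (j + 1) n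
           else Yc n y (j + k - n + 1) (2 * n - k - 1) - Yc n y (j + k - n + 1) (2 * n - k)))
    ↔
    ((∀ j i, ¬(1 ≤ j ∧ j ≤ n ∧ 1 ≤ i ∧ i ≤ n) → y j i = 0) ∧
     (∀ i, 1 ≤ i → i ≤ n - 1 →
        (∀ t, 1 ≤ t → t < i → y (t + 1) (i - t) ≤ y t (i - t + 1)) ∧ 0 ≤ y i 1) ∧
     (∀ j, 1 ≤ j → j ≤ n - 1 →
        y (j + 1) (n - 1) ≤ 2 * y j n ∧
        (∀ t, j + 1 ≤ t → t < n → y (t + 1) (n + j - t - 1) ≤ y t (n + j - t)) ∧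
        0 ≤ y n j) ∧
     (∀ j, 2 ≤ j → j ≤ n →
        (∀ i, n - j + 1 ≤ i → i < n - 1 → y j (i + 1) ≤ y j i) ∧
        2 * y j n ≤ y j (n - 1) ∧ 0 ≤ 2 * y j n)) := by
  have Yeq : ∀ j i, Yc n y j i = y j i := by
    intro j i
    unfold Yc
    split_ifs with h
    · rfl
    · exact (hconv j i (by omega)).symm
  constructor
  · intro H
    have hA : ∀ j k, 1 ≤ j → k ≤ n - 2 → y (j + 1) k ≤ y j (k + 1) := by
      intro j k hj hk
      have h := H j k hj (by omega)
      rw [if_pos hk] at h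
      simp only [Yeq] at h
      omega
    have hB : ∀ j, 1 ≤ j → y (j + 1) (n - 1) ≤ 2 * y j n := by
      intro j hj
      have h := H j (n - 1) hj (by omega)
      have c1 : ¬(n - 1 ≤ n - 2) := by omega
      rw [if_neg c1, if_pos rfl] at h
      simp only [Yeq] at h
      omega
    have hC : ∀ j, 1 ≤ j → 2 * y (j + 1) n ≤ y (j + 1) (n - 1) := by
      intro j hj
      have h := H j n hj (by omega)
      have c1 : ¬(n ≤ n - 2) := by omega
      have c2 : ¬(n = n - 1) := by omega
      rw [if_neg c1, if_neg c2, if_pos rfl] at h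
      simp only [Yeq] at h
      omega
    have hD : ∀ j i, 1 ≤ j → i ≤ n - 2 →
        y (j + (n - i)) (i + 1) ≤ y (j + (n - i)) i := by
      intro j i hj hi
      have h := H j (2 * n - 1 - i) hj (by omega)
      have c1 : ¬(2 * n - 1 - i ≤ n - 2) := by omega
      have c2 : ¬(2 * n - 1 - i = n - 1) := by omega
      have c3 : ¬(2 * n - 1 - i = n) := by omega
      rw [if_neg c1, if_neg c2, if_neg c3] at h
      simp only [Yeq] at h
      have e1 : j + (2 * n - 1 - i) - n + 1 = j + (n - i) := by omega
      have e2 : 2 * n - (2 * n - 1 - i) - 1 = i := by omega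
      have e3 : 2 * n - (2 * n - 1 - i) = i + 1 := by omega
      rw [e1, e2, e3] at h
      omega
    have hPOS : ∀ c, c ≤ n - 2 → ∀ r, 1 ≤ r → 0 ≤ y r (c + 1) := by
      intro c
      induction c with
      | zero =>
        intro _ r hr
        have h := hA r 0 hr (by omega)
        have z : y (r + 1) 0 = 0 := hconv _ _ (by omega)
        omega
      | succ c ih =>
        intro hc r hr
        have h := hA r (c + 1) hr (by omega)
        have p := ih (by omega) (r + 1) (by omega)
        omega
    have Z : ∀ i, i ≤ n → ∀ m, n < m → y m i = 0 := by
      intro i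
      induction i with
      | zero =>
        intro _ m _
        exact hconv m 0 (by omega)
      | succ i ih =>
        intro hi m hm
        by_cases hlast : i + 1 = n
        · have c1 := hC (m - 1) (by omega)
          rw [show m - 1 + 1 = m by omega] at c1
          have c2 := hB m (by omega)
          have z1 : y m (n - 1) = 0 := by
            have h := ih (by omega) m hm
            rwa [show i = n - 1 by omega] at h
          have z2 : y (m + 1) (n - 1) = 0 := by
            have h := ih (by omega) (m + 1) (by omega)
            rwa [show i = n - 1 by omega] at h
          rw [hlast]
          omega
        · have hup := hD (m - (n - i)) i (by omega) (by omega)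
          rw [show m - (n - i) + (n - i) = m by omega] at hup
          have hz := ih (by omega) m hm
          have hp := hPOS i (by omega) m (by omega)
          omega
    refine ⟨?_, ?_, ?_, ?_⟩
    · intro j i h
      by_cases h1 : j = 0 ∨ i = 0 ∨ n < i
      · exact hconv j i h1
      · exact Z i (by omega) j (by omega)
    · intro i hi1 hi2
      refine ⟨?_, ?_⟩
      · intro t ht1 ht2
        exact hA t (i - t) ht1 (by omega)
      · have h := hPOS 0 (by omega) i hi1
        simpa using h
    · intro j hj1 hj2
      refine ⟨hB j hj1, ?_, ?_⟩
      · intro t ht1 ht2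
        have h := hA t (n + j - t - 1) (by omega) (by omega)
        rw [show n + j - t - 1 + 1 = n + j - t by omega] at h
        exact h
      · have h := hPOS (j - 1) (by omega) n (by omega)
        rwa [show j - 1 + 1 = j by omega] at h
    · intro j hj2 hjn
      refine ⟨?_, ?_, ?_⟩
      · intro i hi1 hi2
        have h := hD (j - (n - i)) i (by omega) (by omega)
        rwa [show j - (n - i) + (n - i) = j by omega] at h
      · have h := hC (j - 1) (by omega)
        rwa [show j - 1 + 1 = j by omega] at h
      · have h := hB j (by omega)
        have p := hPOS (n - 2) (by omega) (j + 1) (by omega)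
        rw [show n - 2 + 1 = n - 1 by omega] at p
        omega
  · rintro ⟨h1, h2, h3, h4⟩ j k hj hk
    simp only [Yeq]
    split_ifs with hk1 hk2 hk3
    · rcases Nat.eq_zero_or_pos k with rfl | hk0
      · simp only [Nat.zero_add]
        have z : y (j + 1) 0 = 0 := hconv _ _ (by omega)
        have hp : 0 ≤ y j 1 := by
          by_cases hjn : n < j
          · have := h1 j 1 (by omega)
            omega
          · by_cases hje : j = n
            · rw [hje]
              exact (h3 1 le_rfl (by omega)).2.2
            · have := (h2 j hj (by omega)).2
              omega
        omega
      · by_cases hjn : n < j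
        · have z1 : y (j + 1) k = 0 := h1 _ _ (by omega)
          have z2 : y j (k + 1) = 0 := h1 _ _ (by omega)
          omega
        · by_cases hje : j = n
          · have z1 : y (j + 1) k = 0 := h1 _ _ (by omega)
            have p : 0 ≤ y j (k + 1) := by
              rw [hje]
              exact (h3 (k + 1) (by omega) (by omega)).2.2
            omega
          · by_cases hs : j + k ≤ n - 1
            · have h := (h2 (j + k) (by omega) (by omega)).1 j hj (by omega)
              rw [show j + k - j = k by omega] at h
              omega
            · have h := (h3 (j + k + 1 - n) (by omega) (by omega)).2.1 j (by omega) (by omega)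
              rw [show n + (j + k + 1 - n) - j - 1 = k by omega,
                show n + (j + k + 1 - n) - j = k + 1 by omega] at h
              omega
    · by_cases hjn : j ≤ n - 1
      · have h := (h3 j hj hjn).1
        omega
      · have z1 : y (j + 1) (n - 1) = 0 := h1 _ _ (by omega)
        by_cases hje : j = n
        · have p : 0 ≤ 2 * y j n := by
            rw [hje]
            exact (h4 n hn le_rfl).2.2
          omega
        · have z2 : y j n = 0 := h1 _ _ (by omega)
          omega
    · by_cases hjn : j + 1 ≤ n
      · have h := (h4 (j + 1) (by omega) hjn).2.1
        omega
      · have z1 : y (j + 1) (n - 1) = 0 := h1 _ _ (by omega)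
        have z2 : y (j + 1) n = 0 := h1 _ _ (by omega)
        omega
    · have hk4 : n + 1 ≤ k := by omega
      by_cases hm : j + k - n + 1 ≤ n
      · have h := (h4 (j + k - n + 1) (by omega) hm).1 (2 * n - k - 1) (by omega) (by omega)
        rw [show 2 * n - k - 1 + 1 = 2 * n - k by omega] at h
        omega
      · have z1 : y (j + k - n + 1) (2 * n - k - 1) = 0 := h1 _ _ (by omega)
        have z2 : y (j + k - n + 1) (2 * n - k) = 0 := h1 _ _ (by omega)
        omega
end
end

section
/- For type D_n, the polyhedral realization Σ_ι is the set of (x_{j;i}) satisfying: x_{j;i}=0 unless 1 ≤ j ≤ n−1 and 1 ≤ i ≤ n; x_{1;i} ≥ x_{2;i−1} ≥ ⋯ ≥ x_{i;1} ≥ 0 for 1 ≤ i ≤ n−2; x_{j;n−1}+x_{j;n} ≥ x_{j+1;n−2} ≥ ⋯ ≥ x_{n−1;j} ≥ 0 for 1 ≤ j ≤ n−2; x_{j;n−j} ≥ x_{j;n−j+1} ≥ ⋯ ≥ x_{j;n−2} ≥ x_{j;n−1}+x_{j;n} ≥ 0 for 2 ≤ j ≤ n−1; and for n odd the chains x_{1;n−1}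 ≥ x_{2;n} ≥ x_{3;n−1} ≥ ⋯ ≥ x_{n−1;n} ≥ 0 and x_{1;n} ≥ x_{2;n−1} ≥ x_{3;n} ≥ ⋯ ≥ x_{n−1;n−1} ≥ 0 (with the analogous alternating chains ending in x_{n−1;n−1} and x_{n−1;n} respectively when n is even). -/
open scoped Classical

noncomputable section

variable {I : Type*}

theorem typeD_polyhedral_realization (n : ℕ) (hn : 4 ≤ n) (y : ℕ → ℕ → ℤ)
    (hconv : ∀ j i, j = 0 ∨ i = 0 ∨ n < i → y j i = 0)
    (hfin : ∃ N, ∀ j, N ≤ j → ∀ i, y j i = 0) :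
    ((∀ j k : ℕ, 1 ≤ j → k ≤ 2 * n - 2 →
      0 ≤ (if k ≤ n - 3 then Yc n y j (k + 1) - Yc n y (j + 1) k
           else if k = n - 2 then Yc n y j (n - 1) + Yc n y j n - Yc n y (j + 1) (n - 2)
           else if k = n - 1 then Yc n y j n - Yc n y (j + 1) (n - 1)
           else if k = n then
             Yc n y (j + 1) (n - 2) - Yc n y (j + 1) (n - 1) - Yc n y (j + 1) n
           else Yc n y (j + k - n + 1) (2 * n - k - 2) - Yc n y (j + k - n + 1) (2 * n - k - 1))) ∧
     (∀ j : ℕ, 1 ≤ j → 0 ≤ Yc n y j (n - 1) - Yc n y (j + 1) n) ∧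
     (∀ j : ℕ, 1 ≤ j → 0 ≤ y j (n - 1) ∧ 0 ≤ y j n))
    ↔
    ((∀ j i, ¬(1 ≤ j ∧ j ≤ n - 1 ∧ 1 ≤ i ∧ i ≤ n) → y j i = 0) ∧
     (∀ i, 1 ≤ i → i ≤ n - 2 →
        (∀ t, 1 ≤ t → t < i → y (t + 1) (i - t) ≤ y t (i - t + 1)) ∧ 0 ≤ y i 1) ∧
     (∀ j, 1 ≤ j → j ≤ n - 2 →
        y (j + 1) (n - 2) ≤ y j (n - 1) + y j n ∧
        (∀ t, j + 1 ≤ t → t < n - 1 → y (t + 1) (n + j - t - 2) ≤ y t (n + j - t - 1)) ∧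
        0 ≤ y (n - 1) j) ∧
     (∀ j, 2 ≤ j → j ≤ n - 1 →
        (∀ i, n - j ≤ i → i < n - 2 → y j (i + 1) ≤ y j i) ∧
        y j (n - 1) + y j n ≤ y j (n - 2) ∧ 0 ≤ y j (n - 1) + y j n) ∧
     ((∀ t, 1 ≤ t → t < n - 1 →
        y (t + 1) (if (t + 1) % 2 = 1 then n - 1 else n) ≤ y t (if t % 2 = 1 then n - 1 else n)) ∧
      0 ≤ y (n - 1) (if (n - 1) % 2 = 1 then n - 1 else n)) ∧
     ((∀ t, 1 ≤ t → t < n - 1 →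
        y (t + 1) (if (t + 1) % 2 = 1 then n else n - 1) ≤ y t (if t % 2 = 1 then n else n - 1)) ∧
      0 ≤ y (n - 1) (if (n - 1) % 2 = 1 then n else n - 1))) := by
  have hYc : ∀ j i, Yc n y j i = y j i := by
    intro j i
    unfold Yc
    split_ifs with h
    · rfl
    · exact (hconv j i (by omega)).symm
  constructor
  · rintro ⟨hA, hB, hC⟩
    simp only [hYc] at hA hB
    -- extracted facts
    have hstep0 : ∀ j k, 1 ≤ j → k ≤ n - 3 → y (j + 1) k ≤ y j (k + 1) := by
      intro j k hj hk
      have h := hA j k hj (by omega)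
      rw [if_pos hk] at h
      omega
    have hA0 : ∀ j, 1 ≤ j → 0 ≤ y j 1 := by
      intro j hj
      have h : y (j + 1) 0 ≤ y j 1 := hstep0 j 0 hj (by omega)
      have := hconv (j + 1) 0 (by omega)
      omega
    have hD : ∀ j, 1 ≤ j → y (j + 1) (n - 2) ≤ y j (n - 1) + y j n := by
      intro j hj
      have h := hA j (n - 2) hj (by omega)
      rw [if_neg (by omega), if_pos rfl] at h
      omega
    have hE : ∀ j, 1 ≤ j → y (j + 1) (n - 1) ≤ y j n := by
      intro j hj
      have h := hA j (n - 1) hj (by omega)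
      rw [if_neg (by omega), if_neg (by omega), if_pos rfl] at h
      omega
    have hF : ∀ J, 2 ≤ J → y J (n - 1) + y J n ≤ y J (n - 2) := by
      intro J hJ
      obtain ⟨j, rfl⟩ : ∃ j, J = j + 1 := ⟨J - 1, by omega⟩
      have h := hA j n (by omega) (by omega)
      rw [if_neg (by omega), if_neg (by omega), if_neg (by omega), if_pos rfl] at h
      omega
    have hG : ∀ J i, n ≤ J + i → i ≤ n - 3 → y J (i + 1) ≤ y J i := by
      intro J i hJi hi
      have h := hA (J + i + 1 - n) (2 * n - 2 - i) (by omega) (by omega)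
      rw [if_neg (by omega), if_neg (by omega), if_neg (by omega), if_neg (by omega)] at h
      have e1 : J + i + 1 - n + (2 * n - 2 - i) - n + 1 = J := by omega
      have e2 : 2 * n - (2 * n - 2 - i) - 2 = i := by omega
      have e3 : 2 * n - (2 * n - 2 - i) - 1 = i + 1 := by omega
      rw [e1, e2, e3] at h
      omega
    -- positivity for i ≤ n-2
    have hpos : ∀ i J, 1 ≤ J → 1 ≤ i → i ≤ n - 2 → 0 ≤ y J i := by
      intro i
      induction i with
      | zero => omega
      | succ m ih =>
        intro J hJ _ h2
        rcases Nat.eq_zero_or_pos m with hm | hm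
        · subst hm; exact hA0 J hJ
        · have h1 := ih (J + 1) (by omega) hm (by omega)
          have h2' := hstep0 J m hJ (by omega)
          omega
    -- vanishing for J ≥ n
    have hneg : ∀ i, i ≤ n - 2 → ∀ J, n ≤ J → y J i ≤ 0 := by
      intro i
      induction i with
      | zero => intro _ J _; have := hconv J 0 (by omega); omega
      | succ m ih =>
        intro h2 J hJ
        have h1 := ih (by omega) J hJ
        have h2' := hG J m (by omega) (by omega)
        omega
    have hzero : ∀ J i, n ≤ J → y J i = 0 := by
      intro J i hJ
      rcases Nat.eq_zero_or_pos i with hi | hi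
      · exact hconv J i (by omega)
      rcases le_or_gt i (n - 2) with h2 | h2
      · have := hpos i J (by omega) hi h2
        have := hneg i h2 J hJ
        omega
      rcases le_or_gt i n with h3 | h3
      · -- i = n-1 or i = n
        have hs := hF J (by omega)
        have hz := hneg (n - 2) (le_refl _) J hJ
        have hc := hC J (by omega)
        rcases (by omega : i = n - 1 ∨ i = n) with rfl | rfl <;> omega
      · exact hconv J i (by omega)
    -- 0 ≤ y (n-1) j for 1 ≤ j ≤ n-2
    have hmono : ∀ d i, 1 ≤ i → i + d ≤ n - 2 → y (n - 1) (i + d) ≤ y (n - 1) i := by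
      intro d
      induction d with
      | zero => intro i _ _; exact le_refl _
      | succ m ih =>
        intro i hi hd
        have h1 := ih (i + 1) (by omega) (by omega)
        have h2 := hG (n - 1) i (by omega) (by omega)
        have e : i + 1 + m = i + (m + 1) := by omega
        rw [e] at h1
        omega
    have h3c : ∀ j, 1 ≤ j → j ≤ n - 2 → 0 ≤ y (n - 1) j := by
      intro j hj hj2
      have h1 := hmono (n - 2 - j) j hj (by omega)
      have e : j + (n - 2 - j) = n - 2 := by omega
      rw [e] at h1
      have h2 := hF (n - 1) (by omega)
      have hc := hC (n - 1) (by omega)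
      omega
    refine ⟨?_, ?_, ?_, ?_, ⟨?_, ?_⟩, ⟨?_, ?_⟩⟩
    · intro j i h
      rcases (by omega : j = 0 ∨ i = 0 ∨ n < i ∨ n ≤ j) with h' | h' | h' | h'
      · exact hconv j i (by omega)
      · exact hconv j i (by omega)
      · exact hconv j i (by omega)
      · exact hzero j i h'
    · intro i hi hi2
      refine ⟨?_, hA0 i hi⟩
      intro t ht ht2
      have h := hstep0 t (i - t) ht (by omega)
      exact h
    · intro j hj hj2
      refine ⟨hD j hj, ?_, h3c j hj hj2⟩
      intro t ht ht2
      have h := hstep0 t (n + j - t - 2) (by omega) (by omega)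
      have e : n + j - t - 1 = n + j - t - 2 + 1 := by omega
      rw [e]
      exact h
    · intro j hj hj2
      refine ⟨?_, hF j hj, ?_⟩
      · intro i hi hi2
        exact hG j i (by omega) (by omega)
      · have := hC j (by omega); omega
    · intro t ht ht2
      rcases (by omega : t % 2 = 1 ∨ t % 2 = 0) with h | h
      · rw [if_neg (show ¬((t + 1) % 2 = 1) by omega), if_pos h]
        have := hB t ht
        omega
      · rw [if_pos (show (t + 1) % 2 = 1 by omega), if_neg (show ¬(t % 2 = 1) by omega)]
        exact hE t ht
    · have := hC (n - 1) (by omega)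
      split_ifs <;> omega
    · intro t ht ht2
      rcases (by omega : t % 2 = 1 ∨ t % 2 = 0) with h | h
      · rw [if_neg (show ¬((t + 1) % 2 = 1) by omega), if_pos h]
        exact hE t ht
      · rw [if_pos (show (t + 1) % 2 = 1 by omega), if_neg (show ¬(t % 2 = 1) by omega)]
        have := hB t ht
        omega
    · have := hC (n - 1) (by omega)
      split_ifs <;> omega
  · rintro ⟨h1, h2, h3, h4, ⟨h5a, h5at⟩, ⟨h5b, h5bt⟩⟩
    have c1 : ∀ j i, n ≤ j → y j i = 0 := fun j i h => h1 j i (by omega)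
    -- positivity of chain 5a values
    have pos5a : ∀ m t, 1 ≤ t → t + m = n - 1 →
        0 ≤ y t (if t % 2 = 1 then n - 1 else n) := by
      intro m
      induction m with
      | zero => intro t ht he; rw [show t = n - 1 by omega]; exact h5at
      | succ k ih =>
        intro t ht he
        have h1' := ih (t + 1) (by omega) (by omega)
        have h2' := h5a t ht (by omega)
        omega
    have pos5b : ∀ m t, 1 ≤ t → t + m = n - 1 →
        0 ≤ y t (if t % 2 = 1 then n else n - 1) := by
      intro m
      induction m with
      | zero => intro t ht he; rw [show t = n - 1 by omega]; exact h5bt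
      | succ k ih =>
        intro t ht he
        have h1' := ih (t + 1) (by omega) (by omega)
        have h2' := h5b t ht (by omega)
        omega
    have cC : ∀ j, 1 ≤ j → 0 ≤ y j (n - 1) ∧ 0 ≤ y j n := by
      intro j hj
      rcases le_or_gt n j with h | h
      · rw [c1 j (n - 1) h, c1 j n h]; exact ⟨le_refl _, le_refl _⟩
      · have ha := pos5a (n - 1 - j) j hj (by omega)
        have hb := pos5b (n - 1 - j) j hj (by omega)
        rcases (by omega : j % 2 = 1 ∨ j % 2 = 0) with hp | hp
        · rw [if_pos hp] at ha hb; exact ⟨ha, hb⟩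
        · rw [if_neg (by omega)] at ha hb; exact ⟨hb, ha⟩
    refine ⟨?_, ?_, fun j hj => cC j hj⟩
    · -- the family (A)
      intro j k hj hk
      simp only [hYc]
      split_ifs with hk3 hk2 hk1 hk0
      · -- k ≤ n - 3
        rcases Nat.eq_zero_or_pos k with rfl | hkpos
        · rw [Nat.zero_add]
          have hz := hconv (j + 1) 0 (by omega)
          rcases (by omega : j ≤ n - 2 ∨ j = n - 1 ∨ n ≤ j) with h | h | h
          · have := (h2 j hj h).2; omega
          · subst h; have := (h3 1 (by omega) (by omega)).2.2; omega
          · have := c1 j 1 h; omega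
        rcases (by omega : n ≤ j ∨ j = n - 1 ∨ (j ≤ n - 2 ∧ j + k ≤ n - 2) ∨
            (j ≤ n - 2 ∧ n - 1 ≤ j + k)) with h | h | ⟨h, h'⟩ | ⟨h, h'⟩
        · rw [c1 j (k + 1) h, c1 (j + 1) k (by omega)]; omega
        · subst h
          have hz := c1 (n - 1 + 1) k (by omega)
          have := (h3 (k + 1) (by omega) (by omega)).2.2
          omega
        · have hs := (h2 (j + k) (by omega) h').1 j hj (by omega)
          have e : j + k - j = k := by omega
          rw [e] at hs
          omega
        · have hs := (h3 (j + k + 2 - n) (by omega) (by omega)).2.1 j (by omega) (by omega)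
          have e : n + (j + k + 2 - n) - j - 2 = k := by omega
          have e' : n + (j + k + 2 - n) - j - 1 = k + 1 := by omega
          rw [e, e'] at hs
          omega
      · -- k = n - 2
        rcases (by omega : j ≤ n - 2 ∨ j = n - 1 ∨ n ≤ j) with h | h | h
        · have := (h3 j hj h).1; omega
        · subst h
          have hz := c1 (n - 1 + 1) (n - 2) (by omega)
          have := cC (n - 1) (by omega)
          omega
        · have := c1 j (n - 1) h
          have := c1 j n h
          have := c1 (j + 1) (n - 2) (by omega)
          omega
      · -- k = n - 1
        rcases (by omega : j ≤ n - 2 ∨ j = n - 1 ∨ n ≤ j) with h | h | h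
        · rcases (by omega : j % 2 = 1 ∨ j % 2 = 0) with hp | hp
          · have hs := h5b j hj (by omega)
            rw [if_neg (show ¬((j + 1) % 2 = 1) by omega), if_pos hp] at hs
            omega
          · have hs := h5a j hj (by omega)
            rw [if_pos (show (j + 1) % 2 = 1 by omega), if_neg (show ¬(j % 2 = 1) by omega)] at hs
            omega
        · subst h
          have hz := c1 (n - 1 + 1) (n - 1) (by omega)
          have := cC (n - 1) (by omega)
          omega
        · have := c1 j n h
          have := c1 (j + 1) (n - 1) (by omega)
          omega
      · -- k = n
        rcases le_or_gt n (j + 1) with h | h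
        · have := c1 (j + 1) (n - 2) h
          have := c1 (j + 1) (n - 1) h
          have := c1 (j + 1) n h
          omega
        · have := (h4 (j + 1) (by omega) (by omega)).2.1
          omega
      · -- n < k ≤ 2n - 2
        have hkn : n < k := by omega
        set J := j + k - n + 1 with hJ
        set i := 2 * n - k - 2 with hi
        have e3 : 2 * n - k - 1 = i + 1 := by omega
        rw [e3]
        rcases le_or_gt n J with h | h
        · rw [c1 J i h, c1 J (i + 1) h]; omega
        · have := (h4 J (by omega) (by omega)).1 i (by omega) (by omega)
          omega
    · -- (B)
      intro j hj
      simp only [hYc]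
      rcases (by omega : j ≤ n - 2 ∨ n - 1 ≤ j) with h | h
      · rcases (by omega : j % 2 = 1 ∨ j % 2 = 0) with hp | hp
        · have hs := h5a j hj (by omega)
          rw [if_neg (show ¬((j + 1) % 2 = 1) by omega), if_pos hp] at hs
          omega
        · have hs := h5b j hj (by omega)
          rw [if_pos (show (j + 1) % 2 = 1 by omega), if_neg (show ¬(j % 2 = 1) by omega)] at hs
          omega
      · have hz := c1 (j + 1) n (by omega)
        have := (cC j hj).1
        omega
end
end

section
/- For type F_4 with ι = (…,4,3,2,1,4,3,2,1), every point x of the set Σ_ι cut out by the 38 explicit linear inequalities has all coordinates nonnegative, and satisfies x_{m;i} = 0 for all m ≥ 7 and 1 ≤ i ≤ 4; in particular the chain of inequalities x_{j;2} ≥ x_{j+1;1}, 2x_{j;3} ≥ x_{j+1;2}, 2x_{j;4} ≥ x_{j+3;1} together with x_{j;1} ≥ 0 forces nonnegativity, and the inequalities x_{j+5;1} ≥ x_{j+5;2}, x_{j+4;2} ≥ 2x_{j+4;3}, x_{j+3;1} ≥ x_{j+3;4} together with −x_{j+6;1} ≥ 0 force eventual vanishing. -/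
open scoped Classical

noncomputable section

variable {I : Type*}

theorem typeF4_nonneg_and_vanishing (y : ℕ → ℕ → ℤ)
    (hconv : ∀ j i, j = 0 ∨ i = 0 ∨ 4 < i → y j i = 0)
    (hfin : ∃ N, ∀ j, N ≤ j → ∀ i, y j i = 0)
    (hSigma : ∀ j : ℕ, 1 ≤ j →
      0 ≤ y j 1 ∧
      y (j + 1) 1 ≤ y j 2 ∧
      y (j + 1) 2 ≤ 2 * y j 3 ∧
      y (j + 3) 1 ≤ 2 * y j 4 ∧
      2 * y (j + 1) 4 ≤ y (j + 1) 2 ∧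
      y (j + 3) 2 ≤ y (j + 2) 2 ∧
      y (j + 4) 1 ≤ y (j + 2) 1 ∧
      y (j + 4) 2 ≤ 2 * y (j + 2) 4 ∧
      y (j + 3) 4 ≤ y (j + 3) 1 ∧
      2 * y (j + 4) 3 ≤ y (j + 4) 2 ∧
      y (j + 5) 2 ≤ y (j + 5) 1 ∧
      y (j + 6) 1 ≤ 0 ∧
      2 * y (j + 1) 3 ≤ 2 * y j 4 + y (j + 1) 2 ∧
      y (j + 2) 1 + y (j + 2) 2 ≤ 2 * y j 4 ∧
      2 * y (j + 1) 4 + y (j + 3) 1 ≤ 2 * y (j + 1) 3 ∧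
      2 * y (j + 2) 3 ≤ y (j + 2) 1 + y (j + 2) 2 ∧
      2 * y (j + 2) 3 + y (j + 3) 1 ≤ 2 * y (j + 2) 2 ∧
      y (j + 3) 2 ≤ y (j + 2) 1 + y (j + 3) 1 ∧
      2 * y (j + 3) 2 ≤ 2 * y (j + 2) 3 + y (j + 3) 1 ∧
      2 * y (j + 3) 3 ≤ 2 * y (j + 2) 4 + y (j + 3) 1 ∧
      y (j + 3) 2 + y (j + 4) 1 ≤ 2 * y (j + 2) 3 ∧
      y (j + 3) 1 + y (j + 4) 1 ≤ y (j + 2) 2 ∧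
      2 * y (j + 3) 4 + y (j + 4) 1 ≤ y (j + 3) 2 ∧
      2 * y (j + 3) 4 + y (j + 4) 2 ≤ 2 * y (j + 3) 3 ∧
      2 * y (j + 1) 4 + y (j + 2) 2 ≤ 2 * y (j + 1) 3 + y (j + 2) 1 ∧
      2 * y (j + 3) 3 + y (j + 4) 1 ≤ 2 * y (j + 2) 4 + y (j + 3) 2) :
    (∀ j i : ℕ, 0 ≤ y j i) ∧
    (∀ m : ℕ, 7 ≤ m → ∀ i : ℕ, 1 ≤ i → i ≤ 4 → y m i = 0) := by
  have h1 : ∀ j, 1 ≤ j → 0 ≤ y j 1 := fun j hj => (hSigma j hj).1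
  have h2 : ∀ j, 1 ≤ j → 0 ≤ y j 2 := fun j hj =>
    le_trans (h1 (j + 1) (by omega)) (hSigma j hj).2.1
  have h3 : ∀ j, 1 ≤ j → 0 ≤ y j 3 := by
    intro j hj
    have ha := (hSigma j hj).2.2.1
    have hb := h2 (j + 1) (by omega)
    omega
  have h4 : ∀ j, 1 ≤ j → 0 ≤ y j 4 := by
    intro j hj
    have ha := (hSigma j hj).2.2.2.1
    have hb := h1 (j + 3) (by omega)
    omega
  have hnn : ∀ j i : ℕ, 0 ≤ y j i := by
    intro j i
    by_cases h : j = 0 ∨ i = 0 ∨ 4 < i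
    · rw [hconv j i h]
    · push_neg at h
      obtain ⟨hj, hi0, hi4⟩ := h
      have hj1 : 1 ≤ j := Nat.pos_of_ne_zero hj
      have hi1 : 1 ≤ i := Nat.pos_of_ne_zero hi0
      interval_cases i
      · exact h1 j hj1
      · exact h2 j hj1
      · exact h3 j hj1
      · exact h4 j hj1
  refine ⟨hnn, ?_⟩
  intro m hm i hi1 hi4
  have c12 : y m 1 ≤ 0 := by
    have h := (hSigma (m - 6) (by omega)).2.2.2.2.2.2.2.2.2.2.2.1
    rwa [show m - 6 + 6 = m from by omega] at h
  have c11 : y m 2 ≤ y m 1 := by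
    have h := (hSigma (m - 5) (by omega)).2.2.2.2.2.2.2.2.2.2.1
    rwa [show m - 5 + 5 = m from by omega] at h
  have c10 : 2 * y m 3 ≤ y m 2 := by
    have h := (hSigma (m - 4) (by omega)).2.2.2.2.2.2.2.2.2.1
    rwa [show m - 4 + 4 = m from by omega] at h
  have c9 : y m 4 ≤ y m 1 := by
    have h := (hSigma (m - 3) (by omega)).2.2.2.2.2.2.2.2.1
    rwa [show m - 3 + 3 = m from by omega] at h
  have n1 := hnn m 1
  have n2 := hnn m 2
  have n3 := hnn m 3
  have n4 := hnn m 4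
  interval_cases i <;> omega
end
end
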